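/- For self-adjoint operators A₁, A₂ on ℂ^d and k ∈ [d], the sum of the k largest eigenvalues of A₁ + A₂ is at most the optimal value of the linear program maximizing (λ(A₁) ⊕ λ(A₂))ᵀ x subject to: 0 ≤ x^{(1)}_i, x^{(2)}_i ≤ 1 for all i, Σ_i x^{(1)}_i = Σ_i x^{(2)}_i = k, and Σ_{i≤ℓ₁} x^{(1)}_i + Σ_{i≤ℓ₂} x^{(2)}_i ≤ s_k(P_{↓ℓ₁}(A₁) + P_{↓ℓ₂}(A₂)) for all ℓ₁, ℓ₂ ∈ [d]. -/

import Mathlib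

open Matrix

/-- Sum of the `k` largest values of `f` (as the sup of sums over `k`-subsets). -/
noncomputable def sk {ι : Type*} [Fintype ι] (f : ι → ℝ) (k : ℕ) : ℝ :=
  sSup {x | ∃ S : Finset ι, S.card = k ∧ x = ∑ i ∈ S, f i}

/-- Projector onto the span of the first `ℓ` of the vectors `v i`. -/
noncomputable def proj {d : ℕ} (v : Fin d → Fin d → ℂ) (ℓ : ℕ) : Matrix (Fin d) (Fin d) ℂ :=
  ∑ i ∈ Finset.univ.filter (fun i : Fin d => (i : ℕ) < ℓ),
    Matrix.vecMulVec (v i) (star (v i))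

/- ### Auxiliary lemmas -/

lemma sk_max {ι : Type*} [Fintype ι] (f : ι → ℝ) (k : ℕ) (hk : k ≤ Fintype.card ι) :
    ∃ S : Finset ι, S.card = k ∧ sk f k = ∑ i ∈ S, f i ∧
      ∀ T : Finset ι, T.card = k → ∑ i ∈ T, f i ≤ sk f k := by
  classical
  have hne : (Finset.univ.powersetCard k (α := ι)).Nonempty :=
    Finset.powersetCard_nonempty.2 (by simpa using hk)
  set F : Finset ℝ := (Finset.univ.powersetCard k (α := ι)).image (fun S => ∑ i ∈ S, f i) with hF
  have hFne : F.Nonempty := hne.image _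
  have hset : {x | ∃ S : Finset ι, S.card = k ∧ x = ∑ i ∈ S, f i} = ↑F := by
    ext x
    simp only [hF, Finset.coe_image, Set.mem_image, Finset.mem_coe, Finset.mem_powersetCard,
      Set.mem_setOf_eq]
    constructor
    · rintro ⟨S, hS, rfl⟩; exact ⟨S, ⟨S.subset_univ, hS⟩, rfl⟩
    · rintro ⟨S, ⟨_, hS⟩, rfl⟩; exact ⟨S, hS, rfl⟩
  have hsup : sk f k = F.max' hFne := by
    rw [sk, hset, hFne.csSup_eq_max']
  obtain ⟨S, hSmem, hSval⟩ := Finset.mem_image.1 (F.max'_mem hFne)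
  refine ⟨S, (Finset.mem_powersetCard.1 hSmem).2, by rw [hsup, ← hSval], ?_⟩
  intro T hT
  rw [hsup]
  exact F.le_max' _ (Finset.mem_image.2 ⟨T, Finset.mem_powersetCard.2 ⟨T.subset_univ, hT⟩, rfl⟩)

lemma lp_bound {ι : Type*} [Fintype ι] (m t : ι → ℝ) (k : ℕ) (hk1 : 1 ≤ k)
    (hk : k ≤ Fintype.card ι) (ht0 : ∀ i, 0 ≤ t i) (ht1 : ∀ i, t i ≤ 1)
    (hsum : ∑ i, t i = k) : ∑ i, m i * t i ≤ sk m k := by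
  classical
  obtain ⟨S, hScard, hSval, hSmax⟩ := sk_max m k hk
  have hSopt : ∀ T : Finset ι, T.card = k → ∑ i ∈ T, m i ≤ ∑ i ∈ S, m i := by
    intro T hT; rw [← hSval]; exact hSmax T hT
  have hSne : S.Nonempty := Finset.card_pos.1 (by omega)
  set c : ℝ := S.inf' hSne m with hc
  have hcle : ∀ j ∈ S, c ≤ m j := fun j hj => Finset.inf'_le m hj
  have hout : ∀ j ∉ S, m j ≤ c := by
    intro j hj
    by_contra hlt
    push_neg at hlt
    obtain ⟨j₀, hj₀S, hj₀⟩ := Finset.exists_mem_eq_inf' hSne m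
    have hjne : j ∉ S.erase j₀ := fun h => hj (Finset.mem_of_mem_erase h)
    have hcardT : (insert j (S.erase j₀)).card = k := by
      rw [Finset.card_insert_of_notMem hjne, Finset.card_erase_of_mem hj₀S, hScard]
      omega
    have hsumT : ∑ i ∈ insert j (S.erase j₀), m i = m j + ∑ i ∈ S.erase j₀, m i :=
      Finset.sum_insert hjne
    have hsumS : ∑ i ∈ S, m i = m j₀ + ∑ i ∈ S.erase j₀, m i :=
      (Finset.add_sum_erase S m hj₀S).symm
    have hTle := hSopt _ hcardT
    rw [hsumT, hsumS] at hTle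
    have hmj : m j₀ < m j := by rw [hc, hj₀] at hlt; exact hlt
    linarith
  have key : ∑ i, m i * t i ≤ ∑ i ∈ S, m i := by
    have hsplit : ∑ i, m i * t i = ∑ i ∈ S, m i * t i + ∑ i ∈ Sᶜ, m i * t i :=
      (Finset.sum_add_sum_compl S _).symm
    have htsplit : ∑ i ∈ S, t i + ∑ i ∈ Sᶜ, t i = k := by
      rw [Finset.sum_add_sum_compl]; exact hsum
    have h1 : ∑ i ∈ Sᶜ, m i * t i ≤ c * ∑ i ∈ Sᶜ, t i := by
      rw [Finset.mul_sum]
      refine Finset.sum_le_sum fun i hi => ?_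
      exact mul_le_mul_of_nonneg_right (hout i (by simpa using hi)) (ht0 i)
    have h2 : ∑ i ∈ S, (m i - m i * t i) ≥ ∑ i ∈ S, (c - c * t i) := by
      refine Finset.sum_le_sum fun i hi => ?_
      have := hcle i hi
      nlinarith [ht1 i, ht0 i]
    have hSsum : ∑ i ∈ S, (c - c * t i) = c * (k - ∑ i ∈ S, t i) := by
      rw [Finset.sum_sub_distrib, ← Finset.mul_sum, Finset.sum_const, hScard]
      ring
    have hcompl : ∑ i ∈ Sᶜ, t i = k - ∑ i ∈ S, t i := by linarith
    have hdist : ∑ i ∈ S, (m i - m i * t i) = ∑ i ∈ S, m i - ∑ i ∈ S, m i * t i :=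
      Finset.sum_sub_distrib _ _
    have hc2 : c * ∑ i ∈ Sᶜ, t i = c * (↑k - ∑ i ∈ S, t i) := by rw [hcompl]
    linarith
  linarith [key, hSval.ge, hSval.le]

lemma dot_sumF {d : ℕ} {ι : Type*} (s : Finset ι) (z : Fin d → ℂ) (f : ι → Fin d → ℂ) :
    z ⬝ᵥ (∑ i ∈ s, f i) = ∑ i ∈ s, z ⬝ᵥ f i := by
  simp only [dotProduct, Finset.sum_apply, Finset.mul_sum]
  exact Finset.sum_comm

lemma mulVec_sumF {d : ℕ} {ι : Type*} (s : Finset ι) (M : ι → Matrix (Fin d) (Fin d) ℂ)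
    (z : Fin d → ℂ) : (∑ i ∈ s, M i) *ᵥ z = ∑ i ∈ s, M i *ᵥ z := by
  funext a
  simp only [Matrix.mulVec, dotProduct, Matrix.sum_apply, Finset.sum_apply,
    Finset.sum_mul]
  exact Finset.sum_comm

lemma mulVec_sum' {d : ℕ} (A : Matrix (Fin d) (Fin d) ℂ) (f : Fin d → Fin d → ℂ) :
    A *ᵥ (∑ i, f i) = ∑ i, A *ᵥ f i := by
  funext a
  simp only [Matrix.mulVec, Finset.sum_apply]
  exact dot_sumF _ _ _

lemma complete {d : ℕ} (u : Fin d → Fin d → ℂ)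
    (hu : ∀ i j, star (u i) ⬝ᵥ u j = if i = j then 1 else 0) (a b : Fin d) :
    ∑ i, u i a * (starRingEnd ℂ) (u i b) = if a = b then 1 else 0 := by
  classical
  set U : Matrix (Fin d) (Fin d) ℂ := Matrix.of (fun a i => u i a) with hU
  have h1 : Uᴴ * U = 1 := by
    ext i j
    have := hu i j
    simpa [Matrix.mul_apply, Matrix.conjTranspose_apply, Matrix.one_apply, hU,
      dotProduct, Pi.star_apply] using this
  have h2 : U * Uᴴ = 1 := mul_eq_one_comm.1 h1
  have := congrArg (fun M => M a b) h2
  simpa [Matrix.mul_apply, Matrix.conjTranspose_apply, Matrix.one_apply, hU] using this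

lemma expand {d : ℕ} (u : Fin d → Fin d → ℂ)
    (hu : ∀ i j, star (u i) ⬝ᵥ u j = if i = j then 1 else 0) (z : Fin d → ℂ) (a : Fin d) :
    ∑ i, (star (u i) ⬝ᵥ z) * u i a = z a := by
  classical
  have h1 : ∑ i, (star (u i) ⬝ᵥ z) * u i a
      = ∑ i, ∑ b, u i a * (starRingEnd ℂ) (u i b) * z b := by
    congr 1; funext i
    simp only [dotProduct, Finset.sum_mul, Pi.star_apply, Complex.star_def]
    congr 1; funext b
    ring
  rw [h1, Finset.sum_comm]
  have h2 : ∀ b, ∑ i, u i a * (starRingEnd ℂ) (u i b) * z b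
      = (if a = b then (1:ℂ) else 0) * z b := by
    intro b
    rw [← Finset.sum_mul, complete u hu]
  simp only [h2]
  simp [Finset.sum_ite_eq Finset.univ a (fun b => z b)]

lemma star_dot_comm {d : ℕ} (x z : Fin d → ℂ) :
    star z ⬝ᵥ x = (starRingEnd ℂ) (star x ⬝ᵥ z) := by
  simp only [dotProduct, map_sum, Pi.star_apply, Complex.star_def, _root_.map_mul]
  congr 1; funext a
  simp [mul_comm, Complex.conj_conj]

lemma normSq_dot_comm {d : ℕ} (x z : Fin d → ℂ) :
    Complex.normSq (star z ⬝ᵥ x) = Complex.normSq (star x ⬝ᵥ z) := by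
  rw [star_dot_comm]
  exact Complex.normSq_conj _

lemma spectral {d : ℕ} (u : Fin d → Fin d → ℂ)
    (hu : ∀ i j, star (u i) ⬝ᵥ u j = if i = j then 1 else 0)
    (A : Matrix (Fin d) (Fin d) ℂ) (μ : Fin d → ℝ)
    (heig : ∀ i, A *ᵥ u i = (μ i : ℂ) • u i) (z : Fin d → ℂ) :
    star z ⬝ᵥ (A *ᵥ z) = ∑ i, (μ i : ℂ) * (Complex.normSq (star (u i) ⬝ᵥ z) : ℂ) := by
  classical
  have hz : z = ∑ i, (star (u i) ⬝ᵥ z) • u i := by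
    funext a
    rw [Finset.sum_apply]
    exact (expand u hu z a).symm
  have hAz : A *ᵥ z = ∑ i, (star (u i) ⬝ᵥ z) • ((μ i : ℂ) • u i) := by
    conv_lhs => rw [hz]
    rw [mulVec_sum']
    congr 1; funext i
    rw [Matrix.mulVec_smul, heig]
  rw [hAz, dot_sumF]
  congr 1; funext i
  rw [smul_smul, dotProduct_smul, star_dot_comm (u i) z, smul_eq_mul,
    ← Complex.mul_conj]
  ring

lemma parseval {d : ℕ} (u : Fin d → Fin d → ℂ)
    (hu : ∀ i j, star (u i) ⬝ᵥ u j = if i = j then 1 else 0) (z : Fin d → ℂ)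
    (hz : star z ⬝ᵥ z = 1) :
    ∑ s, Complex.normSq (star (u s) ⬝ᵥ z) = 1 := by
  have h := spectral u hu 1 (fun _ => 1) (fun i => by rw [Matrix.one_mulVec]; simp) z
  rw [Matrix.one_mulVec, hz] at h
  have h2 : ((∑ s, Complex.normSq (star (u s) ⬝ᵥ z) : ℝ) : ℂ) = 1 := by
    push_cast
    simpa using h.symm
  exact_mod_cast h2

lemma sum_normSq_le_one {d : ℕ} (u : Fin d → Fin d → ℂ)
    (hu : ∀ i j, star (u i) ⬝ᵥ u j = if i = j then 1 else 0) (z : Fin d → ℂ)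
    (hz : star z ⬝ᵥ z = 1) (S : Finset (Fin d)) :
    ∑ s ∈ S, Complex.normSq (star z ⬝ᵥ u s) ≤ 1 := by
  have hle : ∑ s ∈ S, Complex.normSq (star z ⬝ᵥ u s)
      ≤ ∑ s, Complex.normSq (star z ⬝ᵥ u s) :=
    Finset.sum_le_sum_of_subset_of_nonneg (S.subset_univ)
      (fun i _ _ => Complex.normSq_nonneg _)
  have heq : ∑ s, Complex.normSq (star z ⬝ᵥ u s)
      = ∑ s, Complex.normSq (star (u s) ⬝ᵥ z) := by
    congr 1; funext s; exact normSq_dot_comm (u s) z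
  rw [heq, parseval u hu z hz] at hle
  exact hle

lemma herm_basis_dot {d : ℕ} {A : Matrix (Fin d) (Fin d) ℂ} (hA : A.IsHermitian) (i j : Fin d) :
    star (hA.eigenvectorBasis i : Fin d → ℂ) ⬝ᵥ (hA.eigenvectorBasis j : Fin d → ℂ)
      = if i = j then 1 else 0 := by
  have h := orthonormal_iff_ite.mp hA.eigenvectorBasis.orthonormal i j
  rw [EuclideanSpace.inner_eq_star_dotProduct, dotProduct_comm] at h
  exact h

lemma herm_basis_eig {d : ℕ} {A : Matrix (Fin d) (Fin d) ℂ} (hA : A.IsHermitian) (j : Fin d) :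
    A *ᵥ (hA.eigenvectorBasis j : Fin d → ℂ)
      = ((hA.eigenvalues j : ℝ) : ℂ) • (hA.eigenvectorBasis j : Fin d → ℂ) := by
  funext a
  have h1 : (A *ᵥ (hA.eigenvectorBasis j : Fin d → ℂ)) a
      = hA.eigenvalues j • ((hA.eigenvectorBasis j : Fin d → ℂ) a) :=
    congrFun (hA.mulVec_eigenvectorBasis j) a
  rw [h1, Pi.smul_apply, smul_eq_mul, Complex.real_smul]

lemma proj_dot {d : ℕ} (v : Fin d → Fin d → ℂ) (ℓ : ℕ) (z : Fin d → ℂ) :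
    star z ⬝ᵥ (proj v ℓ *ᵥ z)
      = ((∑ i ∈ Finset.univ.filter (fun i : Fin d => (i : ℕ) < ℓ),
          Complex.normSq (star (v i) ⬝ᵥ z) : ℝ) : ℂ) := by
  classical
  have hvm : ∀ i : Fin d, Matrix.vecMulVec (v i) (star (v i)) *ᵥ z
      = (star (v i) ⬝ᵥ z) • v i := by
    intro i
    funext a
    simp only [Matrix.mulVec, dotProduct, Matrix.vecMulVec_apply, Pi.smul_apply,
      smul_eq_mul, Finset.mul_sum]
    rw [Finset.sum_congr rfl (fun b _ => by ring : ∀ b ∈ Finset.univ,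
      v i a * star (v i) b * z b = star (v i) b * z b * v i a), ← Finset.sum_mul]
  rw [proj, mulVec_sumF, Finset.sum_congr rfl (fun i _ => hvm i), dot_sumF]
  push_cast
  congr 1; funext i
  rw [dotProduct_smul, star_dot_comm (v i) z, smul_eq_mul, ← Complex.mul_conj]

/-- Linear programming refinement of Ky Fan's majorization relation:
`s_k(A₁ + A₂)` is at most the optimal value of the LP with basic and alignment constraints;
equivalently, there is a feasible point whose objective value dominates `s_k(A₁ + A₂)`. -/
theorem stmt17 {d : ℕ} (k : ℕ) (hk1 : 1 ≤ k) (hkd : k ≤ d)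
    (A₁ A₂ : Matrix (Fin d) (Fin d) ℂ) (hA₁ : A₁.IsHermitian) (hA₂ : A₂.IsHermitian)
    (v w : Fin d → Fin d → ℂ)
    (hv : ∀ i j, star (v i) ⬝ᵥ v j = if i = j then 1 else 0)
    (hw : ∀ i j, star (w i) ⬝ᵥ w j = if i = j then 1 else 0)
    (μ ν : Fin d → ℝ) (hμ : Antitone μ) (hν : Antitone ν)
    (hveig : ∀ i, A₁ *ᵥ v i = (μ i : ℂ) • v i)
    (hweig : ∀ i, A₂ *ᵥ w i = (ν i : ℂ) • w i)
    (hS : ∀ ℓ₁ ℓ₂ : ℕ, (proj v ℓ₁ + proj w ℓ₂).IsHermitian) :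
    ∃ x1 x2 : Fin d → ℝ,
      (∀ i, 0 ≤ x1 i ∧ x1 i ≤ 1 ∧ 0 ≤ x2 i ∧ x2 i ≤ 1) ∧
      (∑ i, x1 i = k) ∧ (∑ i, x2 i = k) ∧
      (∀ ℓ₁, 1 ≤ ℓ₁ → ℓ₁ ≤ d → ∀ ℓ₂, 1 ≤ ℓ₂ → ℓ₂ ≤ d →
        ∑ i ∈ Finset.univ.filter (fun i : Fin d => (i : ℕ) < ℓ₁), x1 i
          + ∑ i ∈ Finset.univ.filter (fun i : Fin d => (i : ℕ) < ℓ₂), x2 i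
        ≤ sk (hS ℓ₁ ℓ₂).eigenvalues k) ∧
      sk (hA₁.add hA₂).eigenvalues k ≤ ∑ i, μ i * x1 i + ∑ i, ν i * x2 i := by
  classical
  set hC := hA₁.add hA₂ with hhC
  obtain ⟨S, hScard, hSval, hSmax⟩ := sk_max hC.eigenvalues k (by simpa using hkd)
  -- the eigenbasis of A₁ + A₂
  set u : Fin d → Fin d → ℂ := fun j => (hC.eigenvectorBasis j : Fin d → ℂ) with hudef
  have hu : ∀ i j, star (u i) ⬝ᵥ u j = if i = j then 1 else 0 := fun i j =>
    herm_basis_dot hC i j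
  have huu : ∀ s, star (u s) ⬝ᵥ u s = 1 := fun s => by simpa using hu s s
  have hue : ∀ s, (A₁ + A₂) *ᵥ u s = ((hC.eigenvalues s : ℝ) : ℂ) • u s := fun s =>
    herm_basis_eig hC s
  -- the witness
  refine ⟨fun i => ∑ s ∈ S, Complex.normSq (star (v i) ⬝ᵥ u s),
          fun i => ∑ s ∈ S, Complex.normSq (star (w i) ⬝ᵥ u s), ?_, ?_, ?_, ?_, ?_⟩
  · intro i
    have hv1 : star (v i) ⬝ᵥ v i = 1 := by simpa using hv i i
    have hw1 : star (w i) ⬝ᵥ w i = 1 := by simpa using hw i i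
    exact ⟨Finset.sum_nonneg fun s _ => Complex.normSq_nonneg _,
      sum_normSq_le_one u hu (v i) hv1 S,
      Finset.sum_nonneg fun s _ => Complex.normSq_nonneg _,
      sum_normSq_le_one u hu (w i) hw1 S⟩
  · rw [Finset.sum_comm, Finset.sum_congr rfl (fun s _ => parseval v hv (u s) (huu s))]
    simp [hScard]
  · rw [Finset.sum_comm, Finset.sum_congr rfl (fun s _ => parseval w hw (u s) (huu s))]
    simp [hScard]
  · intro ℓ₁ _ _ ℓ₂ _ _
    set hM := hS ℓ₁ ℓ₂ with hhM
    set f : Fin d → Fin d → ℂ := fun j => (hM.eigenvectorBasis j : Fin d → ℂ) with hfdef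
    have hf : ∀ i j, star (f i) ⬝ᵥ f j = if i = j then 1 else 0 := fun i j =>
      herm_basis_dot hM i j
    have hff : ∀ j, star (f j) ⬝ᵥ f j = 1 := fun j => by simpa using hf j j
    have hfe : ∀ j, (proj v ℓ₁ + proj w ℓ₂) *ᵥ f j = ((hM.eigenvalues j : ℝ) : ℂ) • f j := by
      intro j
      simp only [hfdef]
      exact herm_basis_eig hM j
    set t : Fin d → ℝ := fun j => ∑ s ∈ S, Complex.normSq (star (f j) ⬝ᵥ u s) with htdef
    have ht0 : ∀ j, 0 ≤ t j := fun j => Finset.sum_nonneg fun s _ => Complex.normSq_nonneg _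
    have ht1 : ∀ j, t j ≤ 1 := fun j => sum_normSq_le_one u hu (f j) (hff j) S
    have htsum : ∑ j, t j = k := by
      simp only [htdef]
      rw [Finset.sum_comm, Finset.sum_congr rfl (fun s _ => parseval f hf (u s) (huu s))]
      simp [hScard]
    have key1 : ∀ s, ((∑ i ∈ Finset.univ.filter (fun i : Fin d => (i : ℕ) < ℓ₁),
          Complex.normSq (star (v i) ⬝ᵥ u s)
        + ∑ i ∈ Finset.univ.filter (fun i : Fin d => (i : ℕ) < ℓ₂),
          Complex.normSq (star (w i) ⬝ᵥ u s) : ℝ) : ℂ)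
        = ∑ j, (hM.eigenvalues j : ℂ) * (Complex.normSq (star (f j) ⬝ᵥ u s) : ℂ) := by
      intro s
      have hsp := spectral f hf _ hM.eigenvalues hfe (u s)
      rw [← hsp, Matrix.add_mulVec, dotProduct_add, proj_dot, proj_dot]
      push_cast
      ring
    have hL1 : ∑ i ∈ Finset.univ.filter (fun i : Fin d => (i : ℕ) < ℓ₁),
        ∑ s ∈ S, Complex.normSq (star (v i) ⬝ᵥ u s)
        = ∑ s ∈ S, ∑ i ∈ Finset.univ.filter (fun i : Fin d => (i : ℕ) < ℓ₁),
          Complex.normSq (star (v i) ⬝ᵥ u s) := Finset.sum_comm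
    have hL2 : ∑ i ∈ Finset.univ.filter (fun i : Fin d => (i : ℕ) < ℓ₂),
        ∑ s ∈ S, Complex.normSq (star (w i) ⬝ᵥ u s)
        = ∑ s ∈ S, ∑ i ∈ Finset.univ.filter (fun i : Fin d => (i : ℕ) < ℓ₂),
          Complex.normSq (star (w i) ⬝ᵥ u s) := Finset.sum_comm
    have hR : ∑ j, hM.eigenvalues j * t j
        = ∑ s ∈ S, ∑ j, hM.eigenvalues j * Complex.normSq (star (f j) ⬝ᵥ u s) := by
      simp only [htdef, Finset.mul_sum]
      exact Finset.sum_comm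
    have hmid : ∑ s ∈ S, (∑ i ∈ Finset.univ.filter (fun i : Fin d => (i : ℕ) < ℓ₁),
          Complex.normSq (star (v i) ⬝ᵥ u s)
        + ∑ i ∈ Finset.univ.filter (fun i : Fin d => (i : ℕ) < ℓ₂),
          Complex.normSq (star (w i) ⬝ᵥ u s))
        = ∑ s ∈ S, ∑ j, hM.eigenvalues j * Complex.normSq (star (f j) ⬝ᵥ u s) := by
      have : ((∑ s ∈ S, (∑ i ∈ Finset.univ.filter (fun i : Fin d => (i : ℕ) < ℓ₁),
            Complex.normSq (star (v i) ⬝ᵥ u s)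
          + ∑ i ∈ Finset.univ.filter (fun i : Fin d => (i : ℕ) < ℓ₂),
            Complex.normSq (star (w i) ⬝ᵥ u s)) : ℝ) : ℂ)
          = ((∑ s ∈ S, ∑ j, hM.eigenvalues j * Complex.normSq (star (f j) ⬝ᵥ u s) : ℝ) : ℂ) := by
        push_cast
        refine Finset.sum_congr rfl fun s _ => ?_
        have hks := key1 s
        push_cast at hks
        exact hks
      exact_mod_cast this
    rw [hL1, hL2, ← Finset.sum_add_distrib, hmid, ← hR]
    exact lp_bound hM.eigenvalues t k hk1 (by simpa using hkd) ht0 ht1 htsum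
  · have keyF : ∀ s, ((hC.eigenvalues s : ℝ) : ℂ)
        = ∑ i, (μ i : ℂ) * (Complex.normSq (star (v i) ⬝ᵥ u s) : ℂ)
          + ∑ i, (ν i : ℂ) * (Complex.normSq (star (w i) ⬝ᵥ u s) : ℂ) := by
      intro s
      have h3 : star (u s) ⬝ᵥ ((A₁ + A₂) *ᵥ u s) = ((hC.eigenvalues s : ℝ) : ℂ) := by
        rw [hue s, dotProduct_smul, smul_eq_mul, huu s, mul_one]
      rw [← h3, Matrix.add_mulVec, dotProduct_add,
        spectral v hv A₁ μ hveig (u s), spectral w hw A₂ ν hweig (u s)]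
    have hO1 : ∑ i, μ i * ∑ s ∈ S, Complex.normSq (star (v i) ⬝ᵥ u s)
        = ∑ s ∈ S, ∑ i, μ i * Complex.normSq (star (v i) ⬝ᵥ u s) := by
      simp only [Finset.mul_sum]
      exact Finset.sum_comm
    have hO2 : ∑ i, ν i * ∑ s ∈ S, Complex.normSq (star (w i) ⬝ᵥ u s)
        = ∑ s ∈ S, ∑ i, ν i * Complex.normSq (star (w i) ⬝ᵥ u s) := by
      simp only [Finset.mul_sum]
      exact Finset.sum_comm
    have hmid : ∑ s ∈ S, hC.eigenvalues s
        = ∑ s ∈ S, (∑ i, μ i * Complex.normSq (star (v i) ⬝ᵥ u s)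
          + ∑ i, ν i * Complex.normSq (star (w i) ⬝ᵥ u s)) := by
      have : ((∑ s ∈ S, hC.eigenvalues s : ℝ) : ℂ)
          = ((∑ s ∈ S, (∑ i, μ i * Complex.normSq (star (v i) ⬝ᵥ u s)
            + ∑ i, ν i * Complex.normSq (star (w i) ⬝ᵥ u s)) : ℝ) : ℂ) := by
        push_cast
        refine Finset.sum_congr rfl fun s _ => ?_
        have hks := keyF s
        push_cast at hks
        exact hks
      exact_mod_cast this
    rw [hSval, hO1, hO2, ← Finset.sum_add_distrib, hmid]
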